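/- Let G be a finite simple graph, let v be a vertex of degree 1 in G, and let w be its unique neighbor. Then φ(G) ≤ Σ_{u ∈ N(w)\{v}} φ(G − (N[w] ∪ N[u])) + φ(G − {v, w}) + φ(G − N[w]). -/

import Mathlib

open SimpleGraph Finset

/-- `F` is a dissociation set of `G`: the induced subgraph `G[F]` has maximum degree at most 1,
i.e. every vertex of `F` has at most one neighbor inside `F`. -/
def IsDissocSet {V : Type*} (G : SimpleGraph V) (F : Set V) : Prop :=
  ∀ v ∈ F, ({u ∈ F | G.Adj v u} : Set V).ncard ≤ 1

/-- A maximal dissociation set: a dissociation set not properly contained in any other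
dissociation set. -/
def IsMaximalDissocSet {V : Type*} (G : SimpleGraph V) (F : Set V) : Prop :=
  IsDissocSet G F ∧ ∀ F' : Set V, IsDissocSet G F' → F ⊆ F' → F = F'

/-- `φ(G)`: the number of maximal dissociation sets of `G`. -/
noncomputable def numMaximalDissoc {V : Type*} (G : SimpleGraph V) : ℕ :=
  Set.ncard {F : Set V | IsMaximalDissocSet G F}

/-- `φ(G − S)`: the number of maximal dissociation sets of the subgraph of `G`
induced on the complement of `S`. -/
noncomputable def phiDel {V : Type*} (G : SimpleGraph V) (S : Set V) : ℕ :=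
  numMaximalDissoc (G.induce Sᶜ)

lemma isDissocSet_iff' {W : Type*} [Finite W] (H : SimpleGraph W) (F : Set W) :
    IsDissocSet H F ↔ ∀ y ∈ F, ∀ a ∈ F, ∀ b ∈ F, H.Adj y a → H.Adj y b → a = b := by
  constructor
  · intro h y hy a ha b hb hya hyb
    exact (Set.ncard_le_one (Set.toFinite _)).mp (h y hy) a ⟨ha, hya⟩ b ⟨hb, hyb⟩
  · intro h y hy
    rw [Set.ncard_le_one (Set.toFinite _)]
    rintro a ⟨ha, hya⟩ b ⟨hb, hyb⟩
    exact h y hy a ha b hb hya hyb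

lemma key_induce {W : Type*} [Finite W] (H : SimpleGraph W) (S : Set W) (F : Set W)
    (hF : IsMaximalDissocSet H F)
    (hcross : ∀ x ∉ S, ∀ y ∈ F ∩ S, ¬ H.Adj x y) :
    IsMaximalDissocSet (H.induce Sᶜ) (Subtype.val ⁻¹' F) := by
  have hd := (isDissocSet_iff' H F).mp hF.1
  constructor
  · rw [isDissocSet_iff']
    intro y hy a ha b hb hya hyb
    exact Subtype.ext (hd ↑y hy ↑a ha ↑b hb hya hyb)
  · intro F'' hF'' hsub
    have hd'' := (isDissocSet_iff' _ F'').mp hF''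
    apply Set.Subset.antisymm hsub
    intro x hx
    by_contra hxF
    have hxF' : (↑x : W) ∉ F := hxF
    have star : ∀ z, z ∈ F → H.Adj ↑x z → ∃ hz : z ∈ Sᶜ, (⟨z, hz⟩ : ↥Sᶜ) ∈ F'' := by
      intro z hz hadj
      have hzS : z ∉ S := fun h => hcross ↑x x.2 z ⟨hz, h⟩ hadj
      exact ⟨hzS, hsub (by simpa using hz)⟩
    have hdis : IsDissocSet H (insert ↑x F) := by
      rw [isDissocSet_iff']
      intro y hy a ha b hb hya hyb
      rcases hy with rfl | hy
      · have ha' : a ∈ F := by rcases ha with rfl | h; exacts [absurd hya (H.irrefl), h]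
        have hb' : b ∈ F := by rcases hb with rfl | h; exacts [absurd hyb (H.irrefl), h]
        obtain ⟨haS, haF''⟩ := star a ha' hya
        obtain ⟨hbS, hbF''⟩ := star b hb' hyb
        exact congrArg Subtype.val (hd'' x hx ⟨a, haS⟩ haF'' ⟨b, hbS⟩ hbF'' hya hyb)
      · have keyy : ∀ c ∈ insert (↑x : W) F, H.Adj y c → H.Adj y ↑x → c = ↑x := by
          intro c hc hyc hyx
          rcases hc with rfl | hc
          · rfl
          · obtain ⟨hyS, hyF''⟩ := star y hy hyx.symm
            have hcS : c ∉ S := fun h => hcross y hyS c ⟨hc, h⟩ hyc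
            have hcF'' : (⟨c, hcS⟩ : ↥Sᶜ) ∈ F'' := hsub (by simpa using hc)
            exact congrArg Subtype.val (hd'' ⟨y, hyS⟩ hyF'' ⟨c, hcS⟩ hcF'' x hx hyc hyx)
        rcases ha with rfl | ha
        · exact (keyy b hb hyb hya).symm
        · rcases hb with rfl | hb
          · exact keyy a (Set.mem_insert_iff.mpr (Or.inr ha)) hya hyb
          · exact hd y hy a ha b hb hya hyb
    have := hF.2 _ hdis (Set.subset_insert _ _)
    exact hxF' (this ▸ Set.mem_insert _ _)

lemma ncard_biUnion_le' {ι α : Type*} [Finite α] (s : Finset ι) (f : ι → Set α) :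
    (⋃ i ∈ s, f i).ncard ≤ ∑ i ∈ s, (f i).ncard := by
  classical
  induction s using Finset.induction with
  | empty => simp
  | insert a s h ih =>
      rw [Finset.sum_insert h, Finset.set_biUnion_insert]
      exact le_trans (Set.ncard_union_le _ _) (by omega)

lemma ncard_le_phiDel {V : Type*} [Finite V] (G : SimpleGraph V) (S T : Set V)
    (𝒜 : Set (Set V))
    (h1 : ∀ F ∈ 𝒜, IsMaximalDissocSet G F)
    (h2 : ∀ F ∈ 𝒜, ∀ x ∉ S, ∀ y ∈ F ∩ S, ¬ G.Adj x y)
    (h3 : ∀ F ∈ 𝒜, F ∩ S = T) :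
    𝒜.ncard ≤ phiDel G S := by
  show 𝒜.ncard ≤ Set.ncard {F : Set ↥Sᶜ | IsMaximalDissocSet (G.induce Sᶜ) F}
  refine Set.ncard_le_ncard_of_injOn (fun F => (Subtype.val ⁻¹' F : Set ↥Sᶜ))
    (fun F hF => key_induce G S F (h1 F hF) (h2 F hF)) ?_ (Set.toFinite _)
  intro F1 h1' F2 h2' heq
  ext x
  by_cases hxS : x ∈ S
  · constructor
    · intro hx
      have : x ∈ F2 ∩ S := (h3 F2 h2') ▸ (h3 F1 h1') ▸ (⟨hx, hxS⟩ : x ∈ F1 ∩ S)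
      exact this.1
    · intro hx
      have : x ∈ F1 ∩ S := (h3 F1 h1') ▸ (h3 F2 h2') ▸ (⟨hx, hxS⟩ : x ∈ F2 ∩ S)
      exact this.1
  · have := Set.ext_iff.mp heq ⟨x, hxS⟩
    simpa using this

theorem numMaximalDissoc_le_rec_of_leaf {V : Type*} [Fintype V] [DecidableEq V]
    (G : SimpleGraph V) [DecidableRel G.Adj] (v w : V)
    (hdv : G.degree v = 1) (hvw : G.Adj v w) :
    numMaximalDissoc G ≤
      (∑ u ∈ G.neighborFinset w \ {v},
          phiDel G (insert w (G.neighborSet w) ∪ insert u (G.neighborSet u))) +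
        phiDel G {v, w} + phiDel G (insert w (G.neighborSet w)) := by
  classical
  -- v's unique neighbor is w
  have hNv : ∀ x, G.Adj v x → x = w := by
    intro x hx
    have h1 : G.neighborFinset v = {w} := by
      obtain ⟨a, ha⟩ := Finset.card_eq_one.mp hdv
      have hw : w ∈ G.neighborFinset v := (G.mem_neighborFinset v w).mpr hvw
      rw [ha] at hw ⊢
      rw [Finset.mem_singleton.mp hw]
    have : x ∈ G.neighborFinset v := (G.mem_neighborFinset v x).mpr hx
    rw [h1] at this
    exact Finset.mem_singleton.mp this
  have hdchar : ∀ F : Set V, IsDissocSet G F →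
      ∀ y ∈ F, ∀ a ∈ F, ∀ b ∈ F, G.Adj y a → G.Adj y b → a = b :=
    fun F hF => (isDissocSet_iff' G F).mp hF
  -- if w ∉ F then v ∈ F
  have hv_mem : ∀ F : Set V, IsMaximalDissocSet G F → w ∉ F → v ∈ F := by
    intro F hF hwF
    have hdis : IsDissocSet G (insert v F) := by
      rw [isDissocSet_iff']
      intro y hy a ha b hb hya hyb
      rcases hy with hyv | hy
      · rw [hNv a (hyv ▸ hya), hNv b (hyv ▸ hyb)]
      · rcases ha with hav | ha
        · exact absurd ((hNv y (hav ▸ hya).symm) ▸ hy) hwF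
        · rcases hb with hbv | hb
          · exact absurd ((hNv y (hbv ▸ hyb).symm) ▸ hy) hwF
          · exact hdchar F hF.1 y hy a ha b hb hya hyb
    have := hF.2 _ hdis (Set.subset_insert _ _)
    exact this ▸ Set.mem_insert _ _
  -- if w ∈ F then w has a neighbor in F
  have hw_nbr : ∀ F : Set V, IsMaximalDissocSet G F → w ∈ F → ∃ u, G.Adj w u ∧ u ∈ F := by
    intro F hF hwF
    by_cases hvF : v ∈ F
    · exact ⟨v, hvw.symm, hvF⟩
    by_contra hno
    push_neg at hno
    have hdis : IsDissocSet G (insert v F) := by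
      rw [isDissocSet_iff']
      intro y hy a ha b hb hya hyb
      rcases hy with hyv | hy
      · rw [hNv a (hyv ▸ hya), hNv b (hyv ▸ hyb)]
      · rcases ha with hav | ha
        · have hyw : y = w := hNv y (hav ▸ hya).symm
          rcases hb with hbv | hb
          · rw [hav, hbv]
          · exact absurd hb (hno b (hyw ▸ hyb))
        · rcases hb with hbv | hb
          · have hyw : y = w := hNv y (hbv ▸ hyb).symm
            exact absurd ha (hno a (hyw ▸ hya))
          · exact hdchar F hF.1 y hy a ha b hb hya hyb
    have := hF.2 _ hdis (Set.subset_insert _ _)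
    exact hvF (this ▸ Set.mem_insert _ _)
  -- the classes
  set A : Set (Set V) := {F | IsMaximalDissocSet G F ∧ w ∉ F} with hA
  set B : Set (Set V) := {F | IsMaximalDissocSet G F ∧ v ∈ F ∧ w ∈ F} with hB
  set C : V → Set (Set V) := fun u => {F | IsMaximalDissocSet G F ∧ u ∈ F ∧ w ∈ F} with hC
  set U : Set (Set V) := ⋃ u ∈ G.neighborFinset w \ {v}, C u with hU
  -- the cover
  have hcover : {F : Set V | IsMaximalDissocSet G F} ⊆ (U ∪ A) ∪ B := by
    intro F hF
    by_cases hwF : w ∈ F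
    · obtain ⟨u, hadj, huF⟩ := hw_nbr F hF hwF
      by_cases huv : u = v
      · exact Or.inr ⟨hF, huv ▸ huF, hwF⟩
      · refine Or.inl (Or.inl ?_)
        refine Set.mem_iUnion₂.mpr ⟨u, ?_, ⟨hF, huF, hwF⟩⟩
        exact Finset.mem_sdiff.mpr ⟨(G.mem_neighborFinset w u).mpr hadj,
          by simpa using huv⟩
    · exact Or.inl (Or.inr ⟨hF, hwF⟩)
  -- bounds on each class
  have hAle : A.ncard ≤ phiDel G {v, w} := by
    apply ncard_le_phiDel G _ {v} A (fun F hF => hF.1)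
    · rintro F ⟨hF, hwF⟩ x hx y ⟨hyF, hyS⟩ hadj
      rcases hyS with hyv | hyw
      · have hxw : x = w := hNv x (hyv ▸ hadj).symm
        exact hx (by simp [hxw])
      · exact hwF (hyw ▸ hyF)
    · rintro F ⟨hF, hwF⟩
      ext x
      constructor
      · rintro ⟨hxF, hx⟩
        rcases hx with hxv | hxw
        · exact hxv
        · exact absurd (hxw ▸ hxF) hwF
      · intro hx
        have hxv : x = v := hx
        exact ⟨hxv ▸ hv_mem F hF hwF, Or.inl hxv⟩
  have hBle : B.ncard ≤ phiDel G (insert w (G.neighborSet w)) := by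
    apply ncard_le_phiDel G _ {v, w} B (fun F hF => hF.1)
    · rintro F ⟨hF, hvF, hwF⟩ x hx y ⟨hyF, hyS⟩ hadj
      rcases hyS with hyw | hyN
      · exact hx (hyw ▸ Set.mem_insert_iff.mpr
          (Or.inr ((G.mem_neighborSet y x).mpr hadj.symm)))
      · have hyv : y = v := hdchar F hF.1 w hwF y hyF v hvF hyN hvw.symm
        have hxw : x = w := hNv x (hyv ▸ hadj).symm
        exact hx (by simp [hxw])
    · rintro F ⟨hF, hvF, hwF⟩
      ext x
      constructor
      · rintro ⟨hxF, hxS⟩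
        rcases hxS with hxw | hxN
        · exact Or.inr hxw
        · exact Or.inl (hdchar F hF.1 w hwF x hxF v hvF hxN hvw.symm)
      · rintro (hxv | hxw)
        · exact ⟨hxv ▸ hvF, Or.inr (hxv ▸ hvw.symm)⟩
        · exact ⟨hxw ▸ hwF, Or.inl hxw⟩
  have hUle : U.ncard ≤ ∑ u ∈ G.neighborFinset w \ {v},
      phiDel G (insert w (G.neighborSet w) ∪ insert u (G.neighborSet u)) := by
    refine le_trans (ncard_biUnion_le' _ _) (Finset.sum_le_sum ?_)
    intro u hu
    have hadj : G.Adj w u := by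
      have := (Finset.mem_sdiff.mp hu).1
      exact (G.mem_neighborFinset w u).mp this
    apply ncard_le_phiDel G _ {u, w} (C u) (fun F hF => hF.1)
    · rintro F ⟨hF, huF, hwF⟩ x hx y ⟨hyF, hyS⟩ hadjxy
      have hy' : y = u ∨ y = w := by
        rcases hyS with (hyw | hyN) | (hyu | hyN)
        · exact Or.inr hyw
        · exact Or.inl (hdchar F hF.1 w hwF y hyF u huF hyN hadj)
        · exact Or.inl hyu
        · exact Or.inr (hdchar F hF.1 u huF y hyF w hwF hyN hadj.symm)
      rcases hy' with hyu | hyw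
      · exact hx (Or.inr (hyu ▸ Set.mem_insert_iff.mpr
          (Or.inr ((G.mem_neighborSet y x).mpr hadjxy.symm))))
      · exact hx (Or.inl (hyw ▸ Set.mem_insert_iff.mpr
          (Or.inr ((G.mem_neighborSet y x).mpr hadjxy.symm))))
    · rintro F ⟨hF, huF, hwF⟩
      ext x
      constructor
      · rintro ⟨hxF, hxS⟩
        rcases hxS with (hxw | hxN) | (hxu | hxN)
        · exact Or.inr hxw
        · exact Or.inl (hdchar F hF.1 w hwF x hxF u huF hxN hadj)
        · exact Or.inl hxu
        · exact Or.inr (hdchar F hF.1 u huF x hxF w hwF hxN hadj.symm)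
      · rintro (hxu | hxw)
        · exact ⟨hxu ▸ huF, Or.inr (Or.inl hxu)⟩
        · exact ⟨hxw ▸ hwF, Or.inl (Or.inl hxw)⟩
  -- put it together
  calc numMaximalDissoc G = Set.ncard {F : Set V | IsMaximalDissocSet G F} := rfl
    _ ≤ ((U ∪ A) ∪ B).ncard := Set.ncard_le_ncard hcover (Set.toFinite _)
    _ ≤ (U ∪ A).ncard + B.ncard := Set.ncard_union_le _ _
    _ ≤ (U.ncard + A.ncard) + B.ncard := by
        have := Set.ncard_union_le U A
        omega
    _ ≤ _ := by
        have := hAle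
        have := hBle
        have := hUle
        omega
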